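/- For x > 0, the map x ↦ x f(x) where f(x) = ∫_ℝ x w(v)/(x^2+v^2) dv with w(v)=e^{-v^2}/√π, i.e. x ↦ ∫_ℝ x^2 w(v)/(x^2+v^2) dv, is strictly increasing, tends to 0 as x→0^+ and to 1 as x→∞. -/

import Mathlib

open MeasureTheory Real Filter

noncomputable def w (v : ℝ) : ℝ := Real.exp (-v ^ 2) / Real.sqrt Real.pi

noncomputable def g (x : ℝ) : ℝ := ∫ v : ℝ, x ^ 2 * w v / (x ^ 2 + v ^ 2)

lemma w_pos (v : ℝ) : 0 < w v :=
  div_pos (Real.exp_pos _) (Real.sqrt_pos.2 Real.pi_pos)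

lemma int_w : Integrable w := by
  have := integrable_exp_neg_mul_sq (b := (1:ℝ)) one_pos
  have h : Integrable (fun v : ℝ => Real.exp (-v ^ 2)) := by simpa using this
  rw [show w = fun v => Real.exp (-v ^ 2) * (Real.sqrt Real.pi)⁻¹ from funext fun v => by simp [w, div_eq_mul_inv]]
  exact h.mul_const _

lemma integral_w : ∫ v : ℝ, w v = 1 := by
  have h := integral_gaussian 1
  simp only [neg_mul, one_mul] at h
  have : ∫ v : ℝ, w v = (∫ v : ℝ, Real.exp (-v ^ 2)) / Real.sqrt Real.pi := by
    simp [w, div_eq_mul_inv, integral_mul_const]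
  rw [this, h]
  rw [div_one, div_self]
  exact ne_of_gt (Real.sqrt_pos.2 Real.pi_pos)

lemma denom_pos {x : ℝ} (hx : 0 < x) (v : ℝ) : 0 < x ^ 2 + v ^ 2 :=
  add_pos_of_pos_of_nonneg (pow_pos hx 2) (sq_nonneg v)

lemma integrand_nonneg {x : ℝ} (hx : 0 < x) (v : ℝ) :
    0 ≤ x ^ 2 * w v / (x ^ 2 + v ^ 2) :=
  div_nonneg (mul_nonneg (sq_nonneg x) (w_pos v).le) (denom_pos hx v).le

lemma integrand_le {x : ℝ} (hx : 0 < x) (v : ℝ) :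
    x ^ 2 * w v / (x ^ 2 + v ^ 2) ≤ w v := by
  rw [div_le_iff₀ (denom_pos hx v)]
  nlinarith [sq_nonneg v, (w_pos v).le, mul_nonneg (w_pos v).le (sq_nonneg v)]

lemma int_integrand {x : ℝ} (hx : 0 < x) :
    Integrable (fun v : ℝ => x ^ 2 * w v / (x ^ 2 + v ^ 2)) := by
  refine int_w.mono ?_ ?_
  · apply Continuous.aestronglyMeasurable
    apply Continuous.div
    · exact (continuous_const.mul (by unfold w; continuity))
    · continuity
    · exact fun v => (denom_pos hx v).ne'
  · filter_upwards with v
    rw [Real.norm_eq_abs, Real.norm_eq_abs, abs_of_nonneg (integrand_nonneg hx v),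
      abs_of_nonneg (w_pos v).le]
    exact integrand_le hx v

lemma integrand_mono {x y : ℝ} (hx : 0 < x) (hxy : x < y) (v : ℝ) :
    x ^ 2 * w v / (x ^ 2 + v ^ 2) ≤ y ^ 2 * w v / (y ^ 2 + v ^ 2) := by
  have hy : 0 < y := hx.trans hxy
  have hsq : x ^ 2 ≤ y ^ 2 := by nlinarith
  rw [div_le_div_iff₀ (denom_pos hx v) (denom_pos hy v)]
  nlinarith [mul_nonneg (mul_nonneg (w_pos v).le (sq_nonneg v)) (sub_nonneg.2 hsq)]

theorem stmt7 :
    StrictMonoOn g (Set.Ioi 0) ∧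
    Tendsto g (nhdsWithin 0 (Set.Ioi 0)) (nhds 0) ∧
    Tendsto g Filter.atTop (nhds 1) := by
  refine ⟨?_, ?_, ?_⟩
  · -- strict monotone
    intro x hx y hy hxy
    simp only [Set.mem_Ioi] at hx hy
    have key : 0 < ∫ v : ℝ,
        (y ^ 2 * w v / (y ^ 2 + v ^ 2) - x ^ 2 * w v / (x ^ 2 + v ^ 2)) := by
      rw [integral_pos_iff_support_of_nonneg_ae]
      · have hsub : {v : ℝ | v ≠ 0} ⊆ Function.support
            (fun v : ℝ => y ^ 2 * w v / (y ^ 2 + v ^ 2) - x ^ 2 * w v / (x ^ 2 + v ^ 2)) := by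
          intro v hv
          have hv' : v ≠ 0 := hv
          have hv2 : 0 < v ^ 2 := by positivity
          simp only [Function.mem_support]
          have hsq : x ^ 2 < y ^ 2 := by nlinarith
          have : x ^ 2 * w v / (x ^ 2 + v ^ 2) < y ^ 2 * w v / (y ^ 2 + v ^ 2) := by
            rw [div_lt_div_iff₀ (denom_pos hx v) (denom_pos (hx.trans hxy) v)]
            nlinarith [mul_pos (mul_pos (w_pos v) hv2) (sub_pos.2 hsq)]
          linarith
        have hsub' : Set.Ioo (0:ℝ) 1 ⊆ Function.support
            (fun v : ℝ => y ^ 2 * w v / (y ^ 2 + v ^ 2) - x ^ 2 * w v / (x ^ 2 + v ^ 2)) :=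
          fun v hv => hsub (ne_of_gt hv.1)
        refine lt_of_lt_of_le ?_ (measure_mono hsub')
        rw [Real.volume_Ioo]
        norm_num
      · filter_upwards with v
        have := integrand_mono hx hxy v
        simp only [Pi.zero_apply]
        linarith
      · exact (int_integrand (hx.trans hxy)).sub (int_integrand hx)
    have := integral_sub (int_integrand (hx.trans hxy)) (int_integrand hx)
    rw [this] at key
    unfold g
    linarith
  · -- tendsto 0
    have h : Tendsto (fun x : ℝ => ∫ v : ℝ, x ^ 2 * w v / (x ^ 2 + v ^ 2))
        (nhdsWithin 0 (Set.Ioi 0)) (nhds (∫ _ : ℝ, (0:ℝ))) := by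
      apply tendsto_integral_filter_of_dominated_convergence w
      · filter_upwards [self_mem_nhdsWithin] with x hx
        simp only [Set.mem_Ioi] at hx
        exact (int_integrand hx).aestronglyMeasurable
      · filter_upwards [self_mem_nhdsWithin] with x hx
        simp only [Set.mem_Ioi] at hx
        filter_upwards with v
        rw [Real.norm_eq_abs, abs_of_nonneg (integrand_nonneg hx v)]
        exact integrand_le hx v
      · exact int_w
      · have h0 : ∀ᵐ v : ℝ, v ≠ 0 := by
          rw [ae_iff]
          simpa using Real.volume_singleton (a := (0:ℝ))
        filter_upwards [h0] with v hv
        have hv2 : (0:ℝ) < v ^ 2 := by positivity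
        have : Tendsto (fun x : ℝ => x ^ 2 * w v / (x ^ 2 + v ^ 2))
            (nhdsWithin 0 (Set.Ioi 0)) (nhds (0 ^ 2 * w v / (0 ^ 2 + v ^ 2))) := by
          apply Tendsto.mono_left _ nhdsWithin_le_nhds
          apply Tendsto.div
          · exact ((continuous_pow 2).tendsto 0).mul_const _
          · exact ((continuous_pow 2).tendsto 0).add tendsto_const_nhds
          · positivity
        simpa using this
    simp only [integral_zero] at h
    exact h
  · -- tendsto 1
    have h1 : Tendsto (fun x : ℝ => ∫ v : ℝ, x ^ 2 * w v / (x ^ 2 + v ^ 2)) atTop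
        (nhds (∫ v : ℝ, w v)) := by
      apply tendsto_integral_filter_of_dominated_convergence w
      · filter_upwards [eventually_gt_atTop 0] with x hx
        exact (int_integrand hx).aestronglyMeasurable
      · filter_upwards [eventually_gt_atTop 0] with x hx
        filter_upwards with v
        rw [Real.norm_eq_abs, abs_of_nonneg (integrand_nonneg hx v)]
        exact integrand_le hx v
      · exact int_w
      · filter_upwards with v
        have : Tendsto (fun x : ℝ => x ^ 2 * w v / (x ^ 2 + v ^ 2)) atTop (nhds (w v)) := by
          have heq : ∀ᶠ x : ℝ in atTop, w v / (1 + v ^ 2 / x ^ 2)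
              = x ^ 2 * w v / (x ^ 2 + v ^ 2) := by
            filter_upwards [eventually_gt_atTop 0] with x hx
            have hx2 : (x:ℝ) ^ 2 ≠ 0 := by positivity
            field_simp
          refine Tendsto.congr' heq ?_
          have hden : Tendsto (fun x : ℝ => 1 + v ^ 2 / x ^ 2) atTop (nhds 1) := by
            have : Tendsto (fun x : ℝ => v ^ 2 / x ^ 2) atTop (nhds 0) := by
              apply Tendsto.div_atTop tendsto_const_nhds
              exact tendsto_pow_atTop (by norm_num)
            simpa using tendsto_const_nhds.add this
          have hd := tendsto_const_nhds (x := w v) (f := atTop).div hden (by norm_num)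
          rw [div_one] at hd
          exact hd
        exact this
    rw [integral_w] at h1
    exact h1
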